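/- arXiv:1409.4226 — 8 statements merged into one kernel-verified Lean document; each statement's English description precedes it below -/
import Mathlib

section
/- Let T : Π → A be a function on a group Π with values in an integral domain A of characteristic ≠ 2 satisfying: (P1) T(1)=2, (P2) T(g₁g₂)=T(g₂g₁), (P3) T(g₁)T(g₂)T(g₃)+T(g₁g₂g₃)+T(g₁g₃g₂)−T(g₁g₂)T(g₃)−T(g₂g₃)T(g₁)−T(g₁g₃)T(g₂)=0, and (P4) T(g)²−T(g²)=2, for all g,g₁,g₂,g₃ ∈ Π. Then T satisfies (C2): T(g₁)T(g₂) = T(g₁g₂) + T(g₁⁻¹g₂) for all g₁,g₂ ∈ Π. -/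
theorem pseudo_rep_P_implies_C2
    (G : Type*) [Group G] (A : Type*) [CommRing A] [IsDomain A]
    (hchar : ringChar A ≠ 2)
    (T : G → A)
    (hP1 : T 1 = 2)
    (hP2 : ∀ g₁ g₂ : G, T (g₁ * g₂) = T (g₂ * g₁))
    (hP3 : ∀ g₁ g₂ g₃ : G,
      T g₁ * T g₂ * T g₃ + T (g₁ * g₂ * g₃) + T (g₁ * g₃ * g₂)
        - T (g₁ * g₂) * T g₃ - T (g₂ * g₃) * T g₁ - T (g₁ * g₃) * T g₂ = 0)
    (hP4 : ∀ g : G, T g ^ 2 - T (g ^ 2) = 2) :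
    ∀ g₁ g₂ : G, T g₁ * T g₂ = T (g₁ * g₂) + T (g₁⁻¹ * g₂) := by
  have h2 : (2 : A) ≠ 0 := Ring.two_ne_zero hchar
  -- key identity: T(ab) T(b) = T(a b²) + T(a)
  have key : ∀ a b : G, T (a * b) * T b = T (a * b ^ 2) + T a := by
    intro a b
    have h3 := hP3 a b b
    have hab2 : a * b * b = a * b ^ 2 := by rw [pow_two, ← mul_assoc]
    have hbb : b * b = b ^ 2 := (pow_two b).symm
    rw [hab2, hbb] at h3
    have h4 := hP4 b
    have hmain : 2 * (T (a * b) * T b) = 2 * (T (a * b ^ 2) + T a) := by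
      linear_combination -h3 + T a * h4
    exact mul_left_cancel₀ h2 hmain
  -- T is inversion-invariant
  have hinv : ∀ x : G, T x⁻¹ = T x := by
    intro x
    have ha : T x * T x⁻¹ = T x * T x := by
      have hk := key (x * x) x⁻¹
      have e1 : x * x * x⁻¹ = x := mul_inv_cancel_right x x
      have e2 : x * x * x⁻¹ ^ 2 = 1 := by
        rw [pow_two, ← mul_assoc, mul_inv_cancel_right, mul_inv_cancel]
      have e3 : x * x = x ^ 2 := (pow_two x).symm
      rw [e1, e2, e3, hP1] at hk
      linear_combination hk - hP4 x
    have hb : T x⁻¹ * T x = T x⁻¹ * T x⁻¹ := by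
      have hk := key (x⁻¹ * x⁻¹) x
      have e1 : x⁻¹ * x⁻¹ * x = x⁻¹ := inv_mul_cancel_right x⁻¹ x
      have e2 : x⁻¹ * x⁻¹ * x ^ 2 = 1 := by
        rw [pow_two, ← mul_assoc, inv_mul_cancel_right, inv_mul_cancel]
      have e3 : x⁻¹ * x⁻¹ = x⁻¹ ^ 2 := (pow_two x⁻¹).symm
      rw [e1, e2, e3, hP1] at hk
      linear_combination hk - hP4 x⁻¹
    have hz : (T x⁻¹ - T x) * T x = 0 := by linear_combination ha
    rcases mul_eq_zero.mp hz with h | h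
    · exact sub_eq_zero.mp h
    · have hx0 : T x⁻¹ * T x⁻¹ = 0 := by rw [← hb, h, mul_zero]
      have : T x⁻¹ = 0 := by
        rcases mul_eq_zero.mp hx0 with h' | h' <;> exact h'
      rw [this, h]
  intro g₁ g₂
  have hk := key (g₁ * g₂⁻¹) g₂
  have e1 : g₁ * g₂⁻¹ * g₂ = g₁ := inv_mul_cancel_right g₁ g₂
  have e2 : g₁ * g₂⁻¹ * g₂ ^ 2 = g₁ * g₂ := by
    rw [pow_two, ← mul_assoc, inv_mul_cancel_right]
  rw [e1, e2] at hk
  have e3 : T (g₁ * g₂⁻¹) = T (g₁⁻¹ * g₂) := by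
    rw [← hinv (g₁ * g₂⁻¹), mul_inv_rev, inv_inv, hP2]
  rw [e3] at hk
  exact hk
end

section
/- Let T : Π → A be a function on a group Π with values in a commutative ring A satisfying (C1) T(1)=2 and (C2) T(g₁)T(g₂) = T(g₁g₂) + T(g₁⁻¹g₂) for all g₁,g₂ ∈ Π. Then T(g₁g₂) = T(g₂g₁) for all g₁,g₂ ∈ Π. -/
theorem C_relations_imply_P2
    (G : Type*) [Group G] (A : Type*) [CommRing A]
    (T : G → A)
    (hC1 : T 1 = 2)
    (hC2 : ∀ g₁ g₂ : G, T g₁ * T g₂ = T (g₁ * g₂) + T (g₁⁻¹ * g₂)) :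
    ∀ g₁ g₂ : G, T (g₁ * g₂) = T (g₂ * g₁) := by
  have hinv : ∀ g : G, T g⁻¹ = T g := by
    intro g
    have h := hC2 g 1
    simp [hC1] at h
    linear_combination -h
  intro g₁ g₂
  have h1 := hC2 g₁ g₂
  have h2 := hC2 g₂ g₁
  have h3 : T (g₂⁻¹ * g₁) = T (g₁⁻¹ * g₂) := by
    rw [← hinv (g₂⁻¹ * g₁)]; simp [mul_comm]
  linear_combination -h1 + h2 + h3
end

section
/- Let T : Π → A be a function on a group Π with values in a commutative ring A satisfying (C1) T(1)=2 and (C2) T(g₁)T(g₂) = T(g₁g₂) + T(g₁⁻¹g₂). Then T satisfies (P3): T(g₁)T(g₂)T(g₃) + T(g₁g₂g₃) + T(g₁g₃g₂) − T(g₁g₂)T(g₃) − T(g₂g₃)T(g₁) − T(g₁g₃)T(g₂) = 0 for all g₁,g₂,g₃ ∈ Π. -/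
theorem C_relations_imply_P3
    (G : Type*) [Group G] (A : Type*) [CommRing A]
    (T : G → A)
    (hC1 : T 1 = 2)
    (hC2 : ∀ g₁ g₂ : G, T g₁ * T g₂ = T (g₁ * g₂) + T (g₁⁻¹ * g₂)) :
    ∀ g₁ g₂ g₃ : G,
      T g₁ * T g₂ * T g₃ + T (g₁ * g₂ * g₃) + T (g₁ * g₃ * g₂)
        - T (g₁ * g₂) * T g₃ - T (g₂ * g₃) * T g₁ - T (g₁ * g₃) * T g₂ = 0 := by
  have hinv : ∀ g : G, T g⁻¹ = T g := by
    intro g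
    have h := hC2 g 1
    rw [hC1, mul_one, mul_one] at h
    linear_combination -h
  have hcomm : ∀ a b : G, T (a * b) = T (b * a) := by
    intro a b
    have h1 := hC2 a b
    have h2 := hC2 b a
    have h3 := hinv (b⁻¹ * a)
    rw [mul_inv_rev, inv_inv] at h3
    linear_combination -h1 + h2 - h3
  intro g₁ g₂ g₃
  have h1 := hC2 (g₁ * g₂) g₃
  have h2 := hC2 g₁ (g₂ * g₃)
  have h3 := hC2 g₂ (g₁ * g₃)
  have h4 := hC2 g₁ g₂
  have h6 := hC2 (g₁⁻¹ * g₂) g₃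
  have hc := hcomm g₂ (g₁ * g₃)
  simp only [mul_inv_rev, inv_inv, mul_assoc] at h1 h2 h3 h4 h6 hc ⊢
  linear_combination T g₃ * h4 + h6 - h2 - h3 - hc
end

section
/- For a function T : Π → A from a group Π into an integral domain A with char(A) ≠ 2, the system of conditions (P1)–(P4) (pseudo-SL₂-representation axioms) is equivalent to the system (C1)–(C2): T(1)=2 and T(g₁)T(g₂) = T(g₁g₂) + T(g₁⁻¹g₂). -/
theorem pseudo_rep_P_iff_C
    (G : Type*) [Group G] (A : Type*) [CommRing A] [IsDomain A]
    (hchar : ringChar A ≠ 2)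
    (T : G → A) :
    (T 1 = 2 ∧
     (∀ g₁ g₂ : G, T (g₁ * g₂) = T (g₂ * g₁)) ∧
     (∀ g₁ g₂ g₃ : G,
       T g₁ * T g₂ * T g₃ + T (g₁ * g₂ * g₃) + T (g₁ * g₃ * g₂)
         - T (g₁ * g₂) * T g₃ - T (g₂ * g₃) * T g₁ - T (g₁ * g₃) * T g₂ = 0) ∧
     (∀ g : G, T g ^ 2 - T (g ^ 2) = 2))
    ↔
    (T 1 = 2 ∧ ∀ g₁ g₂ : G, T g₁ * T g₂ = T (g₁ * g₂) + T (g₁⁻¹ * g₂)) := by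
  have h2 : (2 : A) ≠ 0 := Ring.two_ne_zero hchar
  constructor
  · rintro ⟨hP1, hP2, hP3, hP4⟩
    refine ⟨hP1, fun a b => ?_⟩
    have H3 := hP3 (b * a⁻¹) a a
    have H4 := hP4 a
    have e0 : T (a ^ 2) = T (a * a) := congrArg T (sq a)
    have e1 : T (b * a⁻¹ * a) = T b := congrArg T (by group)
    have e2 : T (b * a⁻¹ * a * a) = T (b * a) := congrArg T (by group)
    have e3 : T (b * a) = T (a * b) := hP2 b a
    have e4 : T (b * a⁻¹) = T (a⁻¹ * b) := hP2 b a⁻¹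
    -- From H3, H4: 2*(T(b*a) - T b * T a + T(b*a⁻¹)) = 0
    have key : 2 * (T (a * b) + T (a⁻¹ * b) - T a * T b) = 0 := by
      linear_combination H3 + 2 * T a * e1 - 2 * e2 - T (b * a⁻¹) * H4
        - T (b * a⁻¹) * e0 - 2 * e3 - 2 * e4
    rcases mul_eq_zero.mp key with h | h
    · exact absurd h h2
    · linear_combination -h
  · rintro ⟨hC1, hC2⟩
    have hinv : ∀ g : G, T g⁻¹ = T g := by
      intro g
      have := hC2 g 1
      rw [mul_one, mul_one, hC1] at this
      linear_combination -this
    have hP2 : ∀ g₁ g₂ : G, T (g₁ * g₂) = T (g₂ * g₁) := by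
      intro g₁ g₂
      have h1 := hC2 g₁ g₂
      have h2' := hC2 g₂ g₁
      have e : T (g₂⁻¹ * g₁) = T (g₁⁻¹ * g₂) := by
        rw [← hinv (g₂⁻¹ * g₁)]; congr 1; group
      linear_combination h2' - h1 + e
    refine ⟨hC1, hP2, ?_, ?_⟩
    · intro g₁ g₂ g₃
      have h1 := hC2 g₁ g₂
      have hA := hC2 (g₁⁻¹ * g₂) g₃
      have hB := hC2 g₁ (g₂ * g₃)
      have hC := hC2 g₂ (g₁ * g₃)
      have e1 : T ((g₁⁻¹ * g₂)⁻¹ * g₃) = T (g₂⁻¹ * (g₁ * g₃)) :=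
        congrArg T (by group)
      have e2 : T (g₁⁻¹ * g₂ * g₃) = T (g₁⁻¹ * (g₂ * g₃)) :=
        congrArg T (mul_assoc _ _ _)
      have e3 : T (g₁ * (g₂ * g₃)) = T (g₁ * g₂ * g₃) :=
        congrArg T (mul_assoc _ _ _).symm
      have e4 : T (g₂ * (g₁ * g₃)) = T (g₁ * g₃ * g₂) := hP2 g₂ (g₁ * g₃)
      linear_combination T g₃ * h1 + hA - hB - hC + e1 + e2 - e3 - e4
    · intro g
      have := hC2 g g
      have e : T (g⁻¹ * g) = 2 := by rw [inv_mul_cancel]; exact hC1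
      have e' : T (g * g) = T (g ^ 2) := congrArg T (sq g).symm
      linear_combination this + e + e' - T g * (sq (T g)).symm
end

section
/- Let R be a local ring, Π a group, and ρ, ρ' : Π → SL₂(R) homomorphisms whose reductions mod the maximal ideal agree and whose common residual representation is irreducible over the algebraically closed residue field k. If there exists γ ∈ GL₂(R) with ρ'(g) = γ⁻¹ρ(g)γ for all g, then there exists γ₀ ∈ I₂ + M₂(𝔪_R) with ρ'(g) = γ₀⁻¹ρ(g)γ₀ for all g; that is, ρ and ρ' are strictly equivalent. -/
/-- A matrix representation over a field `k` is irreducible if the only submodules of `k²`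
invariant under all `ρ g` are `⊥` and `⊤`. -/
def IsIrreducibleMatRep {G k : Type*} [Group G] [Field k]
    (ρ : G → Matrix (Fin 2) (Fin 2) k) : Prop :=
  ∀ p : Submodule k (Fin 2 → k),
    (∀ g : G, ∀ v ∈ p, Matrix.mulVec (ρ g) v ∈ p) →
    p = ⊥ ∨ p = ⊤

lemma schur_scalar {G k : Type*} [Group G] [Field k] [IsAlgClosed k]
    (ρb : G → Matrix (Fin 2) (Fin 2) k) (hirr : IsIrreducibleMatRep ρb)
    (M : Matrix (Fin 2) (Fin 2) k) (hM : ∀ g, M * ρb g = ρb g * M) :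
    ∃ c : k, M = c • 1 := by
  obtain ⟨c, hc⟩ := Module.End.exists_eigenvalue (Matrix.mulVecLin M)
  obtain ⟨v, hv⟩ := hc.exists_hasEigenvector
  refine ⟨c, ?_⟩
  set p : Submodule k (Fin 2 → k) := LinearMap.ker ((M - c • 1).mulVecLin) with hp
  have hinv : ∀ g : G, ∀ w ∈ p, Matrix.mulVec (ρb g) w ∈ p := by
    intro g w hw
    simp only [hp, LinearMap.mem_ker, Matrix.mulVecLin_apply] at hw ⊢
    have hcomm : (M - c • 1) * ρb g = ρb g * (M - c • 1) := by
      simp [sub_mul, mul_sub, hM g, Matrix.smul_mul, Matrix.mul_smul]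
    rw [Matrix.mulVec_mulVec, hcomm, ← Matrix.mulVec_mulVec, hw, Matrix.mulVec_zero]
  rcases hirr p hinv with hbot | htop
  · exfalso
    apply hv.2
    have hvv := hv.apply_eq_smul
    simp only [Matrix.mulVecLin_apply] at hvv
    have : v ∈ p := by
      simp only [hp, LinearMap.mem_ker, Matrix.mulVecLin_apply, Matrix.sub_mulVec,
        Matrix.smul_mulVec, Matrix.one_mulVec, hvv, sub_self]
    rw [hbot] at this
    simpa using this
  · have : (M - c • 1).mulVecLin = 0 := by
      apply LinearMap.ext
      intro w
      have : w ∈ p := htop ▸ Submodule.mem_top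
      simpa [hp] using this
    have h0 : M - c • 1 = 0 := by
      ext i j
      have h1 := congrFun (congrArg (fun f => f (Pi.single j 1)) this) i
      simpa [Matrix.mulVecLin_apply, Matrix.one_apply, Pi.single_apply] using h1
    exact sub_eq_zero.mp h0

theorem strict_equivalence_of_equivalence
    (G : Type*) [Group G] (R : Type*) [CommRing R] [IsLocalRing R]
    [IsAlgClosed (IsLocalRing.ResidueField R)]
    (ρ ρ' : G →* Matrix.SpecialLinearGroup (Fin 2) R)
    (hred : ∀ g : G,
      (ρ g : Matrix (Fin 2) (Fin 2) R).map (IsLocalRing.residue R) =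
      (ρ' g : Matrix (Fin 2) (Fin 2) R).map (IsLocalRing.residue R))
    (hirr : IsIrreducibleMatRep
      (fun g : G => (ρ g : Matrix (Fin 2) (Fin 2) R).map (IsLocalRing.residue R)))
    (γ : Matrix.GeneralLinearGroup (Fin 2) R)
    (hγ : ∀ g : G, (ρ' g : Matrix (Fin 2) (Fin 2) R) =
      (↑γ⁻¹ : Matrix (Fin 2) (Fin 2) R) * (ρ g : Matrix (Fin 2) (Fin 2) R) * γ) :
    ∃ γ₀ : Matrix.GeneralLinearGroup (Fin 2) R,
      (∀ i j : Fin 2,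
        (γ₀ : Matrix (Fin 2) (Fin 2) R) i j - (1 : Matrix (Fin 2) (Fin 2) R) i j
          ∈ IsLocalRing.maximalIdeal R) ∧
      ∀ g : G, (ρ' g : Matrix (Fin 2) (Fin 2) R) =
        (↑γ₀⁻¹ : Matrix (Fin 2) (Fin 2) R) * (ρ g : Matrix (Fin 2) (Fin 2) R) * γ₀ := by
  set k := IsLocalRing.ResidueField R
  set res := IsLocalRing.residue R with hres
  -- γ intertwines ρ and ρ' : γ * ρ' g = ρ g * γ
  have hint : ∀ g : G, (γ : Matrix (Fin 2) (Fin 2) R) * (ρ' g : Matrix (Fin 2) (Fin 2) R)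
      = (ρ g : Matrix (Fin 2) (Fin 2) R) * γ := by
    intro g
    rw [hγ g, ← mul_assoc, ← mul_assoc, γ.mul_inv, one_mul]
  -- the reduction of γ commutes with the residual representation
  set M : Matrix (Fin 2) (Fin 2) k := (γ : Matrix (Fin 2) (Fin 2) R).map res with hMdef
  have hcomm : ∀ g : G, M * ((ρ g : Matrix (Fin 2) (Fin 2) R).map res)
      = ((ρ g : Matrix (Fin 2) (Fin 2) R).map res) * M := by
    intro g
    have := congrArg (fun A : Matrix (Fin 2) (Fin 2) R => A.map res) (hint g)
    simp only [Matrix.map_mul] at this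
    rw [← hred g] at this
    rw [hMdef]
    exact this
  obtain ⟨c, hc⟩ := schur_scalar _ hirr M hcomm
  -- c is nonzero
  have hdetγ : IsUnit (γ : Matrix (Fin 2) (Fin 2) R).det :=
    (Matrix.isUnit_iff_isUnit_det _).mp γ.isUnit
  have hc0 : c ≠ 0 := by
    intro h
    have hM0 : M = 0 := by rw [hc, h, zero_smul]
    have h2 : res (γ : Matrix (Fin 2) (Fin 2) R).det = 0 := by
      rw [RingHom.map_det, RingHom.mapMatrix_apply, ← hMdef, hM0]
      simp
    exact (hdetγ.map res).ne_zero h2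
  -- lift c to a unit of R
  obtain ⟨u, hu⟩ := IsLocalRing.residue_surjective (R := R) c
  have huu : IsUnit u := by
    by_contra h
    apply hc0
    rw [← hu]
    apply (IsLocalRing.residue_eq_zero_iff u).mpr
    exact not_not.mp (fun hn => h (IsLocalRing.notMem_maximalIdeal.mp hn))
  set v : Rˣ := huu.unit with hv
  -- define γ₀ = u⁻¹ • γ
  refine ⟨⟨((v⁻¹ : Rˣ) : R) • (γ : Matrix (Fin 2) (Fin 2) R),
    ((v : Rˣ) : R) • (↑γ⁻¹ : Matrix (Fin 2) (Fin 2) R), ?_, ?_⟩, ?_, ?_⟩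
  · rw [Matrix.smul_mul, Matrix.mul_smul, smul_smul, γ.mul_inv]
    norm_num
  · rw [Matrix.smul_mul, Matrix.mul_smul, smul_smul, γ.inv_mul]
    norm_num
  · intro i j
    rw [← IsLocalRing.residue_eq_zero_iff, map_sub]
    have hresv : res ((v : Rˣ) : R) = c := by
      rw [hv]; simpa using hu
    have hresvinv : res (((v⁻¹ : Rˣ) : R)) = c⁻¹ := by
      have : res (((v⁻¹ : Rˣ) : R)) * res ((v : Rˣ) : R) = 1 := by
        rw [← map_mul]; norm_num
      rw [hresv] at this
      field_simp at this ⊢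
      linear_combination this
    show res ((((v⁻¹ : Rˣ) : R) • (γ : Matrix (Fin 2) (Fin 2) R)) i j)
        - res ((1 : Matrix (Fin 2) (Fin 2) R) i j) = 0
    have h2 : res ((((v⁻¹ : Rˣ) : R) • (γ : Matrix (Fin 2) (Fin 2) R)) i j)
        = c⁻¹ * M i j := by
      simp only [Matrix.smul_apply, smul_eq_mul, map_mul, hresvinv, hMdef, Matrix.map_apply]
    rw [h2, hc]
    by_cases hij : i = j <;>
      simp [hij, Matrix.one_apply, Matrix.smul_apply, inv_mul_cancel₀ hc0,
        Matrix.map_one, map_one]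
  · intro g
    show (ρ' g : Matrix (Fin 2) (Fin 2) R)
        = (((v : Rˣ) : R) • (↑γ⁻¹ : Matrix (Fin 2) (Fin 2) R)) * (ρ g : Matrix (Fin 2) (Fin 2) R)
          * (((v⁻¹ : Rˣ) : R) • (γ : Matrix (Fin 2) (Fin 2) R))
    rw [Matrix.smul_mul, Matrix.smul_mul, Matrix.mul_smul, smul_smul]
    rw [hγ g]
    norm_num
end

section
/- The homomorphism f : F₂ → SL₂(A) from the free group on a, b sending a ↦ C(α) = [[α,1],[0,α⁻¹]] and b ↦ D(α,β) = [[α,0],[β,α⁻¹]], over a commutative ring A with α ∈ A× and β ∈ A, satisfies the trefoil relation f(a)f(b)f(a) = f(b)f(a)f(b) if and only if α² + α⁻² + β − 1 = 0, provided A is an integral domain. -/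
theorem trefoil_relation_iff_riley_polynomial
    (A : Type*) [CommRing A] [IsDomain A] (α : Aˣ) (β : A) :
    let C : Matrix (Fin 2) (Fin 2) A := !![(α : A), 1; 0, ((α⁻¹ : Aˣ) : A)]
    let D : Matrix (Fin 2) (Fin 2) A := !![(α : A), 0; β, ((α⁻¹ : Aˣ) : A)]
    (C * D * C = D * C * D) ↔
      (α : A) ^ 2 + ((α⁻¹ : Aˣ) : A) ^ 2 + β - 1 = 0 := by
  intro C D
  have h1 : (α : A) * ((α⁻¹ : Aˣ) : A) = 1 := by
    rw [← Units.val_mul, mul_inv_cancel, Units.val_one]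
  simp only [C, D, Matrix.mul_fin_two, ← Matrix.ext_iff, Fin.forall_fin_two,
    Matrix.of_apply, Matrix.cons_val', Matrix.cons_val_zero, Matrix.cons_val_one,
    Matrix.head_cons, Matrix.empty_val', Matrix.cons_val_fin_one, Matrix.head_fin_const]
  constructor
  · rintro ⟨⟨e00, e01⟩, e10, e11⟩
    linear_combination e01 + h1
  · intro h
    refine ⟨⟨by ring, by linear_combination h - h1⟩,
      by linear_combination (-β) * h + β * h1, by ring⟩
end

section
/- Let k be a field, char(k) ≠ 2, and let t, x, u, v ∈ k satisfy t ≠ 0, t + t⁻¹ = x, x² − 4 ≠ 0, u ≠ 0, v ≠ 0, v²u = u + x² − 4. Define s with s² = v, s ≠ 0, r with r² = x² − 4, r = t − t⁻¹, and U := [[1/s, (1−v)/(s·r)],[r/(2s), (1+v)/(2s)]]. Then det(U) = 1 and U·[[t,1],[0,t⁻¹]]·U⁻¹ = [[x/2, 1],[(x²−4)/4, x/2]]. -/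
theorem conjugation_formula_A
    (k : Type*) [Field k] (hchar : ringChar k ≠ 2)
    (t x u v s r : k)
    (ht : t ≠ 0) (htx : t + t⁻¹ = x) (hx : x ^ 2 - 4 ≠ 0)
    (hu : u ≠ 0) (hv0 : v ≠ 0) (hv : v ^ 2 * u = u + (x ^ 2 - 4))
    (hs : s ^ 2 = v) (hs0 : s ≠ 0)
    (hr2 : r ^ 2 = x ^ 2 - 4) (hr : r = t - t⁻¹) :
    let U : Matrix (Fin 2) (Fin 2) k :=
      !![1 / s, (1 - v) / (s * r); r / (2 * s), (1 + v) / (2 * s)]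
    Matrix.det U = 1 ∧
    U * !![t, 1; 0, t⁻¹] * U⁻¹ = !![x / 2, 1; (x ^ 2 - 4) / 4, x / 2] := by
  intro U
  have h2 : (2 : k) ≠ 0 := Ring.two_ne_zero hchar
  have hrne : r ≠ 0 := by
    intro h
    apply hx
    rw [← hr2, h]; ring
  have hw : t * t⁻¹ = 1 := mul_inv_cancel₀ ht
  generalize hg : t⁻¹ = w at hw htx hr ⊢
  subst hs
  subst htx
  subst hr
  clear hv hx hu hv0 hr2 hg ht
  have hdet : Matrix.det U = 1 := by
    simp only [U, Matrix.det_fin_two_of]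
    field_simp
    ring
  refine ⟨hdet, ?_⟩
  have key : U * !![t, 1; 0, w] =
      !![(t + w) / 2, 1; ((t + w) ^ 2 - 4) / 4, (t + w) / 2] * U := by
    ext i j
    have h4 : (4:k) ≠ 0 := by
      have : (4:k) = 2*2 := by norm_num
      rw [this]; exact mul_ne_zero h2 h2
    have hd : t * s * 4 - w * s * 4 ≠ 0 := fun hh =>
      (mul_ne_zero (mul_ne_zero hrne hs0) h4) (by linear_combination hh)
    fin_cases i <;> fin_cases j <;>
      simp [U, Matrix.mul_apply, Fin.sum_univ_two]
    · field_simp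
      ring
    · field_simp
      ring
    · field_simp [hd]
      linear_combination (-16) * hw
    · field_simp [hd]
      linear_combination (16 * s ^ 2 - 16) * hw
  rw [key, Matrix.mul_assoc, Matrix.mul_nonsing_inv _ (by rw [hdet]; exact isUnit_one),
    Matrix.mul_one]
end

section
/- Let k be a field, char(k) ≠ 2, and let t, x, u, v, s, r ∈ k satisfy t ≠ 0, t + t⁻¹ = x, r = t − t⁻¹, r² = x² − 4 ≠ 0, u ≠ 0, v²u = u + x² − 4, s² = v ≠ 0. With U := [[1/s, (1−v)/(s·r)],[r/(2s), (1+v)/(2s)]], one has U·[[t,0],[u,t⁻¹]]·U⁻¹ = [[x/2, (1−v)²u/(x²−4)],[(1+v)²u/4, x/2]]. -/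
theorem conjugation_formula_B
    (k : Type*) [Field k] (hchar : ringChar k ≠ 2)
    (t x u v s r : k)
    (ht : t ≠ 0) (htx : t + t⁻¹ = x) (hr : r = t - t⁻¹)
    (hr2 : r ^ 2 = x ^ 2 - 4) (hx : x ^ 2 - 4 ≠ 0)
    (hu : u ≠ 0) (hv : v ^ 2 * u = u + (x ^ 2 - 4))
    (hs : s ^ 2 = v) (hv0 : v ≠ 0) :
    let U : Matrix (Fin 2) (Fin 2) k :=
      !![1 / s, (1 - v) / (s * r); r / (2 * s), (1 + v) / (2 * s)]
    U * !![t, 0; u, t⁻¹] * U⁻¹ =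
      !![x / 2, (1 - v) ^ 2 * u / (x ^ 2 - 4); (1 + v) ^ 2 * u / 4, x / 2] := by
  intro U
  have h2 : (2 : k) ≠ 0 := by
    simpa using Ring.two_ne_zero hchar
  have hs0 : s ≠ 0 := fun h => hv0 (by rw [← hs, h]; ring)
  have hr0 : r ≠ 0 := by
    intro h
    exact hx (by rw [← hr2, h]; ring)
  have hdet : U.det = 1 := by
    show Matrix.det !![1 / s, (1 - v) / (s * r); r / (2 * s), (1 + v) / (2 * s)] = 1
    rw [Matrix.det_fin_two_of]
    field_simp
    rw [← hs]
    ring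
  have hUunit : IsUnit U := by
    rw [Matrix.isUnit_iff_isUnit_det, hdet]
    exact isUnit_one
  have := hUunit.invertible
  rw [Matrix.mul_inv_eq_iff_eq_mul_of_invertible]
  have hti : t * t⁻¹ = 1 := mul_inv_cancel₀ ht
  show !![1 / s, (1 - v) / (s * r); r / (2 * s), (1 + v) / (2 * s)] * !![t, 0; u, t⁻¹] = _
  rw [Matrix.mul_fin_two, Matrix.mul_fin_two]
  have htinv : t⁻¹ = x - t := by linear_combination htx
  have hrx : r = 2 * t - x := by rw [hr, htinv]; ring
  have ht2 : t ^ 2 = x * t - 1 := by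
    have h := hti
    rw [htinv] at h
    linear_combination -h
  have h4 : (4 : k) ≠ 0 := by
    simpa [show (4 : k) = 2 * 2 by norm_num] using mul_ne_zero h2 h2
  subst hs
  ext i j
  fin_cases i <;> fin_cases j <;>
      simp [Matrix.mul_apply, Fin.sum_univ_succ, htinv] <;> field_simp [h4]
  · linear_combination (x^2-4)*(-r*hrx + hr2 - hv) - (1-s^2)^2*u*hr2
  · linear_combination (1-s^2)*((x^2-4)*hrx + r*hv)
  · linear_combination (-4*r) * hrx + 4 * hr2 - 4 * hv
  · linear_combination (1+s^2)*(4*r*hrx - 4*hr2 + 4*hv)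
end
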